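/- arXiv:2110.01764 — 5 statements merged into one kernel-verified Lean document; each statement's English description precedes it below -/
import Mathlib

section
/- Let T > 0, β ≥ 0, and let α be a probability measure on [−T, 0]. Let Y : ℝ → ℝ be measurable with Y(t) = Y(0) for all t < 0, and let Z : ℝ × ℝ → ℝ be measurable with Z(t,s) = 0 whenever t < 0 or s < 0. Then ∫_{[0,T]×[0,T]} e^{βs} (∫_{[−T,0]} (|Y(s+u)|² + |Z(t+u, s+u)|²) dα(u)) ds dt ≤ (∫_{[−T,0]} e^{−βu} dα(u)) · ( T ∫_{−T}^{T} e^{βs} |Y(s)|² ds + ∫_{[0,T]×[0,T]} e^{βs} |Z(t,s)|² ds dt ) ≤ e^{βT} ( T ∫_{−T}^{T} e^{βs} |Y(s)|² ds + ∫_{[0,T]×[0,T]} e^{βs} |Z(t,s)|² ds dt ), where both sides are allowed to equal +∞. -/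
open MeasureTheory Set


open scoped ENNReal

private lemma shift_int (h : ℝ → ℝ≥0∞) (a b u : ℝ) :
    (∫⁻ s in Icc a b, h (s + u)) = ∫⁻ s in Icc (a + u) (b + u), h s := by
  rw [← lintegral_indicator measurableSet_Icc, ← lintegral_indicator measurableSet_Icc,
    ← lintegral_add_right_eq_self (fun s => (Icc (a + u) (b + u)).indicator h s) u]
  congr 1; funext s
  by_cases hs : s ∈ Icc a b
  · have h2 : s + u ∈ Icc (a + u) (b + u) := ⟨by linarith [hs.1], by linarith [hs.2]⟩
    simp [hs, h2]
  · have h2 : s + u ∉ Icc (a + u) (b + u) := by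
      intro hm; exact hs ⟨by linarith [hm.1], by linarith [hm.2]⟩
    simp [hs, h2]

private lemma shift_le (ψ : ℝ → ℝ≥0∞) (T u : ℝ) (hu0 : u ≤ 0)
    (h0 : ∀ v < (0:ℝ), ψ v = 0) :
    (∫⁻ v in Icc u (T + u), ψ v) ≤ ∫⁻ v in Icc (0:ℝ) T, ψ v := by
  rw [← lintegral_indicator measurableSet_Icc, ← lintegral_indicator measurableSet_Icc]
  refine lintegral_mono fun v => ?_
  by_cases hv : v ∈ Icc u (T + u)
  · rcases lt_or_ge v 0 with h | h
    · simp [hv, h0 v h]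
    · have h2 : v ∈ Icc (0:ℝ) T := ⟨h, le_trans hv.2 (by linarith)⟩
      simp [hv, h2]
  · simp [hv]



set_option maxHeartbeats 2000000 in
/-- The change-of-variables/Fubini estimate from the proof of Proposition 3.2:
for `Y` extended by `Y t = Y 0` for `t < 0` and `Z` extended by `0` on negative coordinates,
the double time-integral of the delayed quadratic terms is controlled by the weighted norms
of `Y` and `Z`. All integrals are Lebesgue integrals of nonnegative functions in `[0,∞]`. -/
theorem stmt_0 (T β : ℝ) (hT : 0 < T) (hβ : 0 ≤ β)
    (α : Measure ℝ) [IsProbabilityMeasure α] (hα : α (Set.Icc (-T) 0)ᶜ = 0)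
    (Y : ℝ → ℝ) (hYmeas : Measurable Y)
    (hYneg : ∀ t < (0 : ℝ), Y t = Y 0)
    (Z : ℝ → ℝ → ℝ) (hZmeas : Measurable (Function.uncurry Z))
    (hZneg : ∀ t s : ℝ, t < 0 ∨ s < 0 → Z t s = 0) :
    (∫⁻ t in Icc (0:ℝ) T, ∫⁻ s in Icc (0:ℝ) T,
        ENNReal.ofReal (Real.exp (β * s)) *
          ∫⁻ u, (ENNReal.ofReal ((Y (s + u)) ^ 2)
            + ENNReal.ofReal ((Z (t + u) (s + u)) ^ 2)) ∂α)
      ≤ (∫⁻ u, ENNReal.ofReal (Real.exp (-(β * u))) ∂α) *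
          (ENNReal.ofReal T *
              (∫⁻ s in Icc (-T) T,
                ENNReal.ofReal (Real.exp (β * s)) * ENNReal.ofReal ((Y s) ^ 2))
            + ∫⁻ t in Icc (0:ℝ) T, ∫⁻ s in Icc (0:ℝ) T,
                ENNReal.ofReal (Real.exp (β * s)) * ENNReal.ofReal ((Z t s) ^ 2))
    ∧ (∫⁻ u, ENNReal.ofReal (Real.exp (-(β * u))) ∂α) *
          (ENNReal.ofReal T *
              (∫⁻ s in Icc (-T) T,
                ENNReal.ofReal (Real.exp (β * s)) * ENNReal.ofReal ((Y s) ^ 2))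
            + ∫⁻ t in Icc (0:ℝ) T, ∫⁻ s in Icc (0:ℝ) T,
                ENNReal.ofReal (Real.exp (β * s)) * ENNReal.ofReal ((Z t s) ^ 2))
        ≤ ENNReal.ofReal (Real.exp (β * T)) *
          (ENNReal.ofReal T *
              (∫⁻ s in Icc (-T) T,
                ENNReal.ofReal (Real.exp (β * s)) * ENNReal.ofReal ((Y s) ^ 2))
            + ∫⁻ t in Icc (0:ℝ) T, ∫⁻ s in Icc (0:ℝ) T,
                ENNReal.ofReal (Real.exp (β * s)) * ENNReal.ofReal ((Z t s) ^ 2)) := by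
  have hEm : Measurable fun s : ℝ => ENNReal.ofReal (Real.exp (β * s)) :=
    ENNReal.measurable_ofReal.comp (Real.measurable_exp.comp (measurable_const.mul measurable_id))
  have hoYm : Measurable fun v : ℝ => ENNReal.ofReal (Y v ^ 2) :=
    ENNReal.measurable_ofReal.comp (hYmeas.pow_const 2)
  have hoZm : Measurable fun p : ℝ × ℝ => ENNReal.ofReal (Z p.1 p.2 ^ 2) :=
    ENNReal.measurable_ofReal.comp (hZmeas.pow_const 2)
  have hcm : Measurable fun u : ℝ => ENNReal.ofReal (Real.exp (-(β * u))) :=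
    ENNReal.measurable_ofReal.comp
      (Real.measurable_exp.comp (measurable_const.mul measurable_id).neg)
  have hαae : ∀ᵐ u ∂α, u ∈ Icc (-T) 0 := mem_ae_iff.mpr hα
  set A := ∫⁻ s in Icc (-T) T,
      ENNReal.ofReal (Real.exp (β * s)) * ENNReal.ofReal ((Y s) ^ 2) with hA
  set B := ∫⁻ t in Icc (0:ℝ) T, ∫⁻ s in Icc (0:ℝ) T,
      ENNReal.ofReal (Real.exp (β * s)) * ENNReal.ofReal ((Z t s) ^ 2) with hB
  have hexp : ∀ u v : ℝ, ENNReal.ofReal (Real.exp (β * (v - u)))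
      = ENNReal.ofReal (Real.exp (-(β * u))) * ENNReal.ofReal (Real.exp (β * v)) := by
    intro u v
    have h : β * (v - u) = -(β * u) + β * v := by ring
    rw [h, Real.exp_add, ENNReal.ofReal_mul (Real.exp_nonneg _)]
  -- Y bound
  have hYb : ∀ u ∈ Icc (-T) 0,
      (∫⁻ s in Icc (0:ℝ) T,
          ENNReal.ofReal (Real.exp (β * s)) * ENNReal.ofReal (Y (s + u) ^ 2))
        ≤ ENNReal.ofReal (Real.exp (-(β * u))) * A := by
    intro u hu
    have h1 := shift_int
      (fun v => ENNReal.ofReal (Real.exp (β * (v - u))) * ENNReal.ofReal (Y v ^ 2)) 0 T u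
    simp only [add_sub_cancel_right, zero_add] at h1
    rw [h1]
    have h2 : (∫⁻ v in Icc u (T + u),
        ENNReal.ofReal (Real.exp (β * (v - u))) * ENNReal.ofReal (Y v ^ 2))
        = ENNReal.ofReal (Real.exp (-(β * u))) * ∫⁻ v in Icc u (T + u),
            ENNReal.ofReal (Real.exp (β * v)) * ENNReal.ofReal (Y v ^ 2) := by
      rw [← lintegral_const_mul' _ _ ENNReal.ofReal_ne_top]
      refine lintegral_congr fun v => ?_
      rw [hexp u v, mul_assoc]
    rw [h2]
    refine mul_le_mul_right (lintegral_mono_set ?_) _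
    exact Icc_subset_Icc hu.1 (by linarith [hu.2])
  -- Z inner bound
  have hZb1 : ∀ u ∈ Icc (-T) 0, ∀ t : ℝ,
      (∫⁻ s in Icc (0:ℝ) T,
          ENNReal.ofReal (Real.exp (β * s)) * ENNReal.ofReal (Z (t + u) (s + u) ^ 2))
        ≤ ENNReal.ofReal (Real.exp (-(β * u))) *
            ∫⁻ s in Icc (0:ℝ) T,
              ENNReal.ofReal (Real.exp (β * s)) * ENNReal.ofReal (Z (t + u) s ^ 2) := by
    intro u hu t
    have h1 := shift_int
      (fun v => ENNReal.ofReal (Real.exp (β * (v - u))) *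
        ENNReal.ofReal (Z (t + u) v ^ 2)) 0 T u
    simp only [add_sub_cancel_right, zero_add] at h1
    rw [h1]
    have h2 : (∫⁻ v in Icc u (T + u),
        ENNReal.ofReal (Real.exp (β * (v - u))) * ENNReal.ofReal (Z (t + u) v ^ 2))
        = ENNReal.ofReal (Real.exp (-(β * u))) * ∫⁻ v in Icc u (T + u),
            ENNReal.ofReal (Real.exp (β * v)) * ENNReal.ofReal (Z (t + u) v ^ 2) := by
      rw [← lintegral_const_mul' _ _ ENNReal.ofReal_ne_top]
      refine lintegral_congr fun v => ?_
      rw [hexp u v, mul_assoc]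
    rw [h2]
    refine mul_le_mul_right ?_ _
    refine shift_le _ T u hu.2 fun v hv => ?_
    rw [hZneg _ _ (Or.inr hv)]
    simp
  -- Z full bound
  have hZb : ∀ u ∈ Icc (-T) 0,
      (∫⁻ t in Icc (0:ℝ) T, ∫⁻ s in Icc (0:ℝ) T,
          ENNReal.ofReal (Real.exp (β * s)) * ENNReal.ofReal (Z (t + u) (s + u) ^ 2))
        ≤ ENNReal.ofReal (Real.exp (-(β * u))) * B := by
    intro u hu
    have step1 : (∫⁻ t in Icc (0:ℝ) T, ∫⁻ s in Icc (0:ℝ) T,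
        ENNReal.ofReal (Real.exp (β * s)) * ENNReal.ofReal (Z (t + u) (s + u) ^ 2))
        ≤ ∫⁻ t in Icc (0:ℝ) T, ENNReal.ofReal (Real.exp (-(β * u))) *
            ∫⁻ s in Icc (0:ℝ) T,
              ENNReal.ofReal (Real.exp (β * s)) * ENNReal.ofReal (Z (t + u) s ^ 2) :=
      lintegral_mono fun t => hZb1 u hu t
    refine step1.trans ?_
    rw [lintegral_const_mul' _ _ ENNReal.ofReal_ne_top]
    refine mul_le_mul_right ?_ _
    have h3 := shift_int
      (fun w => ∫⁻ s in Icc (0:ℝ) T,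
        ENNReal.ofReal (Real.exp (β * s)) * ENNReal.ofReal (Z w s ^ 2)) 0 T u
    simp only [zero_add] at h3
    rw [h3]
    refine shift_le _ T u hu.2 fun w hw => ?_
    have hz : ∀ s, ENNReal.ofReal (Real.exp (β * s)) * ENNReal.ofReal (Z w s ^ 2) = 0 := by
      intro s; rw [hZneg _ _ (Or.inl hw)]; simp
    simp [hz]
  -- per-u combined bound
  have hcomb : ∀ u ∈ Icc (-T) 0,
      (∫⁻ t in Icc (0:ℝ) T, ∫⁻ s in Icc (0:ℝ) T,
          (ENNReal.ofReal (Real.exp (β * s)) * ENNReal.ofReal (Y (s + u) ^ 2)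
            + ENNReal.ofReal (Real.exp (β * s)) * ENNReal.ofReal (Z (t + u) (s + u) ^ 2)))
        ≤ ENNReal.ofReal (Real.exp (-(β * u))) * (ENNReal.ofReal T * A + B) := by
    intro u hu
    have inner_split : ∀ t : ℝ,
        (∫⁻ s in Icc (0:ℝ) T,
          (ENNReal.ofReal (Real.exp (β * s)) * ENNReal.ofReal (Y (s + u) ^ 2)
            + ENNReal.ofReal (Real.exp (β * s)) * ENNReal.ofReal (Z (t + u) (s + u) ^ 2)))
        = (∫⁻ s in Icc (0:ℝ) T,
            ENNReal.ofReal (Real.exp (β * s)) * ENNReal.ofReal (Y (s + u) ^ 2))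
          + ∫⁻ s in Icc (0:ℝ) T,
              ENNReal.ofReal (Real.exp (β * s)) * ENNReal.ofReal (Z (t + u) (s + u) ^ 2) :=
      fun t => lintegral_add_left (hEm.mul (hoYm.comp (measurable_add_const u))) _
    rw [lintegral_congr inner_split, lintegral_add_left measurable_const]
    rw [setLIntegral_const, Real.volume_Icc, sub_zero]
    have hYpart : (∫⁻ s in Icc (0:ℝ) T,
        ENNReal.ofReal (Real.exp (β * s)) * ENNReal.ofReal (Y (s + u) ^ 2))
          * ENNReal.ofReal T
        ≤ ENNReal.ofReal (Real.exp (-(β * u))) * (ENNReal.ofReal T * A) := by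
      calc _ ≤ (ENNReal.ofReal (Real.exp (-(β * u))) * A) * ENNReal.ofReal T :=
            mul_le_mul_left (hYb u hu) _
        _ = ENNReal.ofReal (Real.exp (-(β * u))) * (ENNReal.ofReal T * A) := by ring
    calc _ ≤ ENNReal.ofReal (Real.exp (-(β * u))) * (ENNReal.ofReal T * A)
          + ENNReal.ofReal (Real.exp (-(β * u))) * B := add_le_add hYpart (hZb u hu)
      _ = ENNReal.ofReal (Real.exp (-(β * u))) * (ENNReal.ofReal T * A + B) := by ring
  -- measurability of the triple integrand
  have hgm : Measurable (fun p : (ℝ × ℝ) × ℝ =>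
      ENNReal.ofReal (Real.exp (β * p.1.2)) *
        (ENNReal.ofReal (Y (p.1.2 + p.2) ^ 2)
          + ENNReal.ofReal (Z (p.1.1 + p.2) (p.1.2 + p.2) ^ 2))) := by
    refine Measurable.mul (hEm.comp (measurable_snd.comp measurable_fst)) ?_
    refine Measurable.add (f := fun p : (ℝ × ℝ) × ℝ => ENNReal.ofReal (Y (p.1.2 + p.2) ^ 2))
      (g := fun p : (ℝ × ℝ) × ℝ => ENNReal.ofReal (Z (p.1.1 + p.2) (p.1.2 + p.2) ^ 2)) ?_ ?_
    · exact hoYm.comp ((measurable_snd.comp measurable_fst).add measurable_snd)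
    · exact hoZm.comp (((measurable_fst.comp measurable_fst).add measurable_snd).prodMk
        ((measurable_snd.comp measurable_fst).add measurable_snd))
  -- Fubini: bring the α-integral outside
  have fub : (∫⁻ t in Icc (0:ℝ) T, ∫⁻ s in Icc (0:ℝ) T,
      ENNReal.ofReal (Real.exp (β * s)) *
        ∫⁻ u, (ENNReal.ofReal ((Y (s + u)) ^ 2)
          + ENNReal.ofReal ((Z (t + u) (s + u)) ^ 2)) ∂α)
      = ∫⁻ u, (∫⁻ t in Icc (0:ℝ) T, ∫⁻ s in Icc (0:ℝ) T,
          (ENNReal.ofReal (Real.exp (β * s)) * ENNReal.ofReal (Y (s + u) ^ 2)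
            + ENNReal.ofReal (Real.exp (β * s)) * ENNReal.ofReal (Z (t + u) (s + u) ^ 2))) ∂α := by
    have e1 : ∀ t : ℝ, (∫⁻ s in Icc (0:ℝ) T,
        ENNReal.ofReal (Real.exp (β * s)) *
          ∫⁻ u, (ENNReal.ofReal ((Y (s + u)) ^ 2)
            + ENNReal.ofReal ((Z (t + u) (s + u)) ^ 2)) ∂α)
        = ∫⁻ u, (∫⁻ s in Icc (0:ℝ) T,
            ENNReal.ofReal (Real.exp (β * s)) *
              (ENNReal.ofReal (Y (s + u) ^ 2)
                + ENNReal.ofReal (Z (t + u) (s + u) ^ 2))) ∂α := by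
      intro t
      have e2 : (∫⁻ s in Icc (0:ℝ) T,
          ENNReal.ofReal (Real.exp (β * s)) *
            ∫⁻ u, (ENNReal.ofReal ((Y (s + u)) ^ 2)
              + ENNReal.ofReal ((Z (t + u) (s + u)) ^ 2)) ∂α)
          = ∫⁻ s in Icc (0:ℝ) T, ∫⁻ u,
              ENNReal.ofReal (Real.exp (β * s)) *
                (ENNReal.ofReal (Y (s + u) ^ 2)
                  + ENNReal.ofReal (Z (t + u) (s + u) ^ 2)) ∂α :=
        lintegral_congr fun s => (lintegral_const_mul' _ _ ENNReal.ofReal_ne_top).symm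
      rw [e2]
      have hm1 : Measurable fun p : ℝ × ℝ =>
          ENNReal.ofReal (Real.exp (β * p.1)) *
            (ENNReal.ofReal (Y (p.1 + p.2) ^ 2)
              + ENNReal.ofReal (Z (t + p.2) (p.1 + p.2) ^ 2)) :=
        (hEm.comp measurable_fst).mul
          ((hoYm.comp (measurable_fst.add measurable_snd)).add
            (hoZm.comp ((measurable_const.add measurable_snd).prodMk
              (measurable_fst.add measurable_snd))))
      exact lintegral_lintegral_swap hm1.aemeasurable
    rw [lintegral_congr e1]
    have hHm : Measurable fun x : ℝ × ℝ => ∫⁻ s in Icc (0:ℝ) T,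
        ENNReal.ofReal (Real.exp (β * s)) *
          (ENNReal.ofReal (Y (s + x.2) ^ 2)
            + ENNReal.ofReal (Z (x.1 + x.2) (s + x.2) ^ 2)) :=
      Measurable.lintegral_prod_right'
        (f := fun q : (ℝ × ℝ) × ℝ =>
          ENNReal.ofReal (Real.exp (β * q.2)) *
            (ENNReal.ofReal (Y (q.2 + q.1.2) ^ 2)
              + ENNReal.ofReal (Z (q.1.1 + q.1.2) (q.2 + q.1.2) ^ 2)))
        ((hEm.comp measurable_snd).mul
          ((hoYm.comp (measurable_snd.add (measurable_snd.comp measurable_fst))).add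
            (hoZm.comp
              (((measurable_fst.comp measurable_fst).add
                  (measurable_snd.comp measurable_fst)).prodMk
                (measurable_snd.add (measurable_snd.comp measurable_fst))))))
    have swap2 := lintegral_lintegral_swap
      (μ := volume.restrict (Icc (0:ℝ) T)) (ν := α)
      (f := fun t u => ∫⁻ s in Icc (0:ℝ) T,
        ENNReal.ofReal (Real.exp (β * s)) *
          (ENNReal.ofReal (Y (s + u) ^ 2)
            + ENNReal.ofReal (Z (t + u) (s + u) ^ 2)))
      hHm.aemeasurable
    rw [swap2]
    refine lintegral_congr fun u => lintegral_congr fun t => lintegral_congr fun s => ?_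
    rw [mul_add]
  constructor
  · rw [fub]
    calc _ ≤ ∫⁻ u, ENNReal.ofReal (Real.exp (-(β * u))) *
          (ENNReal.ofReal T * A + B) ∂α :=
        lintegral_mono_ae (hαae.mono fun u hu => hcomb u hu)
      _ = (∫⁻ u, ENNReal.ofReal (Real.exp (-(β * u))) ∂α) *
          (ENNReal.ofReal T * A + B) := lintegral_mul_const _ hcm
  · refine mul_le_mul_left ?_ _
    calc (∫⁻ u, ENNReal.ofReal (Real.exp (-(β * u))) ∂α)
        ≤ ∫⁻ _u, ENNReal.ofReal (Real.exp (β * T)) ∂α := by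
          refine lintegral_mono_ae (hαae.mono fun u hu => ?_)
          refine ENNReal.ofReal_le_ofReal (Real.exp_le_exp.mpr ?_)
          nlinarith [mul_nonneg hβ (by linarith [hu.1] : (0:ℝ) ≤ T + u)]
      _ = ENNReal.ofReal (Real.exp (β * T)) := by simp
end

section
/- Let T > 0, β ≥ 0, K ≥ 0, and let α be a probability measure on [−T, 0]. Let f : [0,T] × [0,T] × ( [−T,0] → ℝ ) × ( [−T,0] → ℝ ) → ℝ satisfy the delayed Lipschitz condition: for all (t,s) ∈ [0,T]² and all functions y, y', z, z' : [−T,0] → ℝ, one has |f(t,s,y,z) − f(t,s,y',z')|² ≤ K ( ∫_{[−T,0]} |y(u) − y'(u)|² dα(u) + ∫_{[−T,0]} |z(u) − z'(u)|² dα(u) ). Let Y, Y' : ℝ → ℝ be measurable with Y(t) = Y(0) and Y'(t) = Y'(0) for t < 0, and Z, Z' : ℝ × ℝ → ℝ measurable with Z(t,s) = Z'(t,s) = 0 whenever t < 0 or s < 0. Writing Y_s for the segment u ↦ Y(s+u) on [−T,0] and Z_{t,s} for u ↦ Z(t+u, s+u), one has ∫_{[0,T]×[0,T]} e^{βs} |f(t,s,Y_s,Z_{t,s})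 − f(t,s,Y'_s,Z'_{t,s})|² ds dt ≤ K (∫_{[−T,0]} e^{−βu} dα(u)) · ( T ∫_{−T}^{T} e^{βs} |Y(s) − Y'(s)|² ds + ∫_{[0,T]×[0,T]} e^{βs} |Z(t,s) − Z'(t,s)|² ds dt ), where both sides are allowed to equal +∞. -/
open MeasureTheory Set

open ENNReal

lemma shift_Icc (g : ℝ → ℝ≥0∞) (u a b : ℝ) :
    ∫⁻ s in Icc a b, g (s + u) = ∫⁻ s in Icc (a+u) (b+u), g s := by
  have h := (measurePreserving_add_right volume u).setLIntegral_comp_preimage_emb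
    (measurableEmbedding_addRight u) g (Icc (a+u) (b+u))
  simpa [preimage_add_const_Icc] using h

lemma lint_zero_mono {g : ℝ → ℝ≥0∞} {A B : Set ℝ} (hA : MeasurableSet A)
    (hB : MeasurableSet B) (h0 : ∀ x ∈ A, x ∉ B → g x = 0) :
    ∫⁻ x in A, g x ≤ ∫⁻ x in B, g x := by
  rw [← lintegral_indicator hA, ← lintegral_indicator hB]
  refine lintegral_mono fun x => ?_
  by_cases hxA : x ∈ A
  · by_cases hxB : x ∈ B
    · simp [hxA, hxB]
    · simp [hxA, hxB, h0 x hxA hxB]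
  · simp [hxA]

lemma exp_split (β u s : ℝ) :
    Real.exp (β * s) = Real.exp (-(β * u)) * Real.exp (β * (s + u)) := by
  rw [← Real.exp_add]; ring_nf

lemma Ylem (T β : ℝ) (Y Y' : ℝ → ℝ) {u : ℝ} (hu : u ∈ Icc (-T) 0) :
    ∫⁻ s in Icc (0:ℝ) T, ENNReal.ofReal (Real.exp (β * s)) *
        ENNReal.ofReal ((Y (s + u) - Y' (s + u))^2)
      ≤ ENNReal.ofReal (Real.exp (-(β * u))) *
          ∫⁻ s in Icc (-T) T,
            ENNReal.ofReal (Real.exp (β * s)) * ENNReal.ofReal ((Y s - Y' s)^2) := by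
  calc ∫⁻ s in Icc (0:ℝ) T, ENNReal.ofReal (Real.exp (β * s)) *
          ENNReal.ofReal ((Y (s + u) - Y' (s + u))^2)
      = ∫⁻ s in Icc (0:ℝ) T, ENNReal.ofReal (Real.exp (-(β * u))) *
          ((fun v => ENNReal.ofReal (Real.exp (β * v)) * ENNReal.ofReal ((Y v - Y' v)^2)) (s + u)) := by
        refine lintegral_congr fun s => ?_
        simp only
        rw [exp_split β u s, ENNReal.ofReal_mul (Real.exp_nonneg _), mul_assoc]
    _ = ENNReal.ofReal (Real.exp (-(β * u))) *
          ∫⁻ s in Icc (0:ℝ) T,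
            (fun v => ENNReal.ofReal (Real.exp (β * v)) * ENNReal.ofReal ((Y v - Y' v)^2)) (s + u) :=
        lintegral_const_mul' _ _ ENNReal.ofReal_ne_top
    _ = ENNReal.ofReal (Real.exp (-(β * u))) *
          ∫⁻ s in Icc (0+u) (T+u),
            ENNReal.ofReal (Real.exp (β * s)) * ENNReal.ofReal ((Y s - Y' s)^2) :=
        congrArg (ENNReal.ofReal (Real.exp (-(β * u))) * ·)
          (shift_Icc (fun v => ENNReal.ofReal (Real.exp (β * v)) *
            ENNReal.ofReal ((Y v - Y' v)^2)) u 0 T)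
    _ ≤ _ := by
        refine mul_le_mul_right (lintegral_mono_set (Icc_subset_Icc ?_ ?_)) _
        · linarith [hu.1]
        · linarith [hu.2]

lemma Zlem (T β : ℝ) (Z Z' : ℝ → ℝ → ℝ)
    (hZneg : ∀ t s : ℝ, t < 0 ∨ s < 0 → Z t s = 0)
    (hZ'neg : ∀ t s : ℝ, t < 0 ∨ s < 0 → Z' t s = 0)
    {u : ℝ} (hu : u ∈ Icc (-T) 0) :
    ∫⁻ t in Icc (0:ℝ) T, ∫⁻ s in Icc (0:ℝ) T, ENNReal.ofReal (Real.exp (β * s)) *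
        ENNReal.ofReal ((Z (t + u) (s + u) - Z' (t + u) (s + u))^2)
      ≤ ENNReal.ofReal (Real.exp (-(β * u))) *
          ∫⁻ t in Icc (0:ℝ) T, ∫⁻ s in Icc (0:ℝ) T,
            ENNReal.ofReal (Real.exp (β * s)) * ENNReal.ofReal ((Z t s - Z' t s)^2) := by
  set g2 : ℝ → ℝ → ℝ≥0∞ := fun a b =>
    ENNReal.ofReal (Real.exp (β * b)) * ENNReal.ofReal ((Z a b - Z' a b)^2) with hg2
  set F : ℝ → ℝ≥0∞ := fun a => ∫⁻ s in Icc (0:ℝ) T, g2 a s with hF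
  have hg2zero : ∀ a b : ℝ, a < 0 ∨ b < 0 → g2 a b = 0 := by
    intro a b hab
    simp [hg2, hZneg a b hab, hZ'neg a b hab]
  calc ∫⁻ t in Icc (0:ℝ) T, ∫⁻ s in Icc (0:ℝ) T, ENNReal.ofReal (Real.exp (β * s)) *
          ENNReal.ofReal ((Z (t + u) (s + u) - Z' (t + u) (s + u))^2)
      = ∫⁻ t in Icc (0:ℝ) T, ENNReal.ofReal (Real.exp (-(β * u))) *
          ∫⁻ s in Icc (0:ℝ) T, g2 (t + u) (s + u) := by
        refine lintegral_congr fun t => ?_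
        rw [← lintegral_const_mul' _ _ ENNReal.ofReal_ne_top]
        refine lintegral_congr fun s => ?_
        rw [exp_split β u s, ENNReal.ofReal_mul (Real.exp_nonneg _), mul_assoc, hg2]
    _ ≤ ∫⁻ t in Icc (0:ℝ) T, ENNReal.ofReal (Real.exp (-(β * u))) * F (t + u) := by
        refine lintegral_mono fun t => mul_le_mul_right ?_ _
        calc ∫⁻ s in Icc (0:ℝ) T, g2 (t + u) (s + u)
            = ∫⁻ s in Icc (0+u) (T+u), g2 (t + u) s := shift_Icc _ u 0 T
          _ ≤ F (t + u) := by
              refine lint_zero_mono measurableSet_Icc measurableSet_Icc fun s hs hns => ?_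
              have hs0 : s < 0 := by
                by_contra h
                exact hns ⟨by linarith, by linarith [hs.2, hu.2]⟩
              exact hg2zero _ _ (Or.inr hs0)
    _ = ENNReal.ofReal (Real.exp (-(β * u))) * ∫⁻ t in Icc (0:ℝ) T, F (t + u) :=
        lintegral_const_mul' _ _ ENNReal.ofReal_ne_top
    _ = ENNReal.ofReal (Real.exp (-(β * u))) * ∫⁻ t in Icc (0+u) (T+u), F t :=
        congrArg (ENNReal.ofReal (Real.exp (-(β * u))) * ·) (shift_Icc F u 0 T)
    _ ≤ _ := by
        refine mul_le_mul_right (lint_zero_mono measurableSet_Icc measurableSet_Icc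
          fun t ht hnt => ?_) _
        have ht0 : t < 0 := by
          by_contra h
          exact hnt ⟨by linarith, by linarith [ht.2, hu.2]⟩
        have hz : ∀ s : ℝ, g2 t s = 0 := fun s => hg2zero _ _ (Or.inl ht0)
        simp [hF, hz]

/-- The key contraction estimate in the Picard iteration for Theorem 3.1: for a generator `f`
satisfying the delayed Lipschitz condition with delay measure `α` on `[-T,0]`, the weighted
double integral of the squared difference of `f` along two pairs of processes (evaluated at
their segments) is controlled by the weighted norms of the differences of the processes. -/
theorem stmt_1 (T β K : ℝ) (hT : 0 < T) (hβ : 0 ≤ β) (hK : 0 ≤ K)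
    (α : Measure ℝ) [IsProbabilityMeasure α] (hα : α (Set.Icc (-T) 0)ᶜ = 0)
    (f : ℝ → ℝ → (ℝ → ℝ) → (ℝ → ℝ) → ℝ)
    (hf : ∀ t ∈ Set.Icc (0:ℝ) T, ∀ s ∈ Set.Icc (0:ℝ) T, ∀ y y' z z' : ℝ → ℝ,
      ENNReal.ofReal ((f t s y z - f t s y' z') ^ 2)
        ≤ ENNReal.ofReal K *
            ((∫⁻ u, ENNReal.ofReal ((y u - y' u) ^ 2) ∂α)
              + ∫⁻ u, ENNReal.ofReal ((z u - z' u) ^ 2) ∂α))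
    (Y Y' : ℝ → ℝ) (hY : Measurable Y) (hY' : Measurable Y')
    (hYneg : ∀ t < (0 : ℝ), Y t = Y 0) (hY'neg : ∀ t < (0 : ℝ), Y' t = Y' 0)
    (Z Z' : ℝ → ℝ → ℝ)
    (hZ : Measurable (Function.uncurry Z)) (hZ' : Measurable (Function.uncurry Z'))
    (hZneg : ∀ t s : ℝ, t < 0 ∨ s < 0 → Z t s = 0)
    (hZ'neg : ∀ t s : ℝ, t < 0 ∨ s < 0 → Z' t s = 0) :
    (∫⁻ t in Icc (0:ℝ) T, ∫⁻ s in Icc (0:ℝ) T,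
        ENNReal.ofReal (Real.exp (β * s)) *
          ENNReal.ofReal ((f t s (fun u => Y (s + u)) (fun u => Z (t + u) (s + u))
            - f t s (fun u => Y' (s + u)) (fun u => Z' (t + u) (s + u))) ^ 2))
      ≤ ENNReal.ofReal K * (∫⁻ u, ENNReal.ofReal (Real.exp (-(β * u))) ∂α) *
          (ENNReal.ofReal T *
              (∫⁻ s in Icc (-T) T,
                ENNReal.ofReal (Real.exp (β * s)) * ENNReal.ofReal ((Y s - Y' s) ^ 2))
            + ∫⁻ t in Icc (0:ℝ) T, ∫⁻ s in Icc (0:ℝ) T,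
                ENNReal.ofReal (Real.exp (β * s)) * ENNReal.ofReal ((Z t s - Z' t s) ^ 2)) := by

  have hae : ∀ᵐ u ∂α, u ∈ Icc (-T) 0 := by rw [ae_iff]; exact hα
  have hZm : Measurable fun p : ℝ × ℝ => Z p.1 p.2 := hZ
  have hZ'm : Measurable fun p : ℝ × ℝ => Z' p.1 p.2 := hZ'
  set Iα := ∫⁻ u, ENNReal.ofReal (Real.exp (-(β * u))) ∂α with hIα
  set SY := ∫⁻ s in Icc (-T) T,
      ENNReal.ofReal (Real.exp (β * s)) * ENNReal.ofReal ((Y s - Y' s) ^ 2) with hSY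
  set SZ := ∫⁻ t in Icc (0:ℝ) T, ∫⁻ s in Icc (0:ℝ) T,
      ENNReal.ofReal (Real.exp (β * s)) * ENNReal.ofReal ((Z t s - Z' t s) ^ 2) with hSZ
  set Ay : ℝ → ℝ≥0∞ := fun s => ∫⁻ u, ENNReal.ofReal ((Y (s + u) - Y' (s + u)) ^ 2) ∂α with hAy
  set Bz : ℝ → ℝ → ℝ≥0∞ := fun t s =>
    ∫⁻ u, ENNReal.ofReal ((Z (t + u) (s + u) - Z' (t + u) (s + u)) ^ 2) ∂α with hBz
  have mYe : Measurable fun p : ℝ × ℝ => ENNReal.ofReal (Real.exp (β * p.1)) *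
      ENNReal.ofReal ((Y (p.1 + p.2) - Y' (p.1 + p.2)) ^ 2) := by fun_prop
  have mAy : Measurable Ay := by
    have m2 : Measurable fun p : ℝ × ℝ =>
        ENNReal.ofReal ((Y (p.1 + p.2) - Y' (p.1 + p.2)) ^ 2) := by fun_prop
    exact m2.lintegral_prod_right'
  have mXZ : Measurable fun q : (ℝ × ℝ) × ℝ => ENNReal.ofReal (Real.exp (β * q.2)) *
      ENNReal.ofReal ((Z (q.1.1 + q.1.2) (q.2 + q.1.2) - Z' (q.1.1 + q.1.2) (q.2 + q.1.2)) ^ 2) := by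
    fun_prop
  have hIYe : (∫⁻ s in Icc (0:ℝ) T, ENNReal.ofReal (Real.exp (β * s)) * Ay s) ≤ Iα * SY := by
    calc ∫⁻ s in Icc (0:ℝ) T, ENNReal.ofReal (Real.exp (β * s)) * Ay s
        = ∫⁻ s in Icc (0:ℝ) T, ∫⁻ u, ENNReal.ofReal (Real.exp (β * s)) *
            ENNReal.ofReal ((Y (s + u) - Y' (s + u)) ^ 2) ∂α :=
          lintegral_congr fun s => (lintegral_const_mul' _ _ ENNReal.ofReal_ne_top).symm
      _ = ∫⁻ u, (∫⁻ s in Icc (0:ℝ) T, ENNReal.ofReal (Real.exp (β * s)) *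
            ENNReal.ofReal ((Y (s + u) - Y' (s + u)) ^ 2)) ∂α :=
          lintegral_lintegral_swap (μ := volume.restrict (Icc (0:ℝ) T)) (ν := α)
            (f := fun s u => ENNReal.ofReal (Real.exp (β * s)) *
              ENNReal.ofReal ((Y (s + u) - Y' (s + u)) ^ 2)) mYe.aemeasurable
      _ ≤ ∫⁻ u, ENNReal.ofReal (Real.exp (-(β * u))) * SY ∂α :=
          lintegral_mono_ae (hae.mono fun u hu => Ylem T β Y Y' hu)
      _ = Iα * SY := lintegral_mul_const _ (by fun_prop)
  have hIZe : (∫⁻ t in Icc (0:ℝ) T, ∫⁻ s in Icc (0:ℝ) T,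
      ENNReal.ofReal (Real.exp (β * s)) * Bz t s) ≤ Iα * SZ := by
    calc ∫⁻ t in Icc (0:ℝ) T, ∫⁻ s in Icc (0:ℝ) T,
          ENNReal.ofReal (Real.exp (β * s)) * Bz t s
        = ∫⁻ t in Icc (0:ℝ) T, ∫⁻ s in Icc (0:ℝ) T, ∫⁻ u,
            ENNReal.ofReal (Real.exp (β * s)) *
              ENNReal.ofReal ((Z (t + u) (s + u) - Z' (t + u) (s + u)) ^ 2) ∂α :=
          lintegral_congr fun t => lintegral_congr fun s =>
            (lintegral_const_mul' _ _ ENNReal.ofReal_ne_top).symm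
      _ = ∫⁻ t in Icc (0:ℝ) T, ∫⁻ u, (∫⁻ s in Icc (0:ℝ) T,
            ENNReal.ofReal (Real.exp (β * s)) *
              ENNReal.ofReal ((Z (t + u) (s + u) - Z' (t + u) (s + u)) ^ 2)) ∂α := by
          refine lintegral_congr fun t => ?_
          refine lintegral_lintegral_swap (μ := volume.restrict (Icc (0:ℝ) T)) (ν := α)
            (f := fun s u => ENNReal.ofReal (Real.exp (β * s)) *
              ENNReal.ofReal ((Z (t + u) (s + u) - Z' (t + u) (s + u)) ^ 2)) ?_
          have : Measurable fun p : ℝ × ℝ => ENNReal.ofReal (Real.exp (β * p.1)) *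
              ENNReal.ofReal ((Z (t + p.2) (p.1 + p.2) - Z' (t + p.2) (p.1 + p.2)) ^ 2) := by
            fun_prop
          exact this.aemeasurable
      _ = ∫⁻ u, (∫⁻ t in Icc (0:ℝ) T, ∫⁻ s in Icc (0:ℝ) T,
            ENNReal.ofReal (Real.exp (β * s)) *
              ENNReal.ofReal ((Z (t + u) (s + u) - Z' (t + u) (s + u)) ^ 2)) ∂α :=
          lintegral_lintegral_swap (μ := volume.restrict (Icc (0:ℝ) T)) (ν := α)
            (f := fun t u => ∫⁻ s in Icc (0:ℝ) T,
              ENNReal.ofReal (Real.exp (β * s)) *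
                ENNReal.ofReal ((Z (t + u) (s + u) - Z' (t + u) (s + u)) ^ 2))
            mXZ.lintegral_prod_right'.aemeasurable
      _ ≤ ∫⁻ u, ENNReal.ofReal (Real.exp (-(β * u))) * SZ ∂α :=
          lintegral_mono_ae (hae.mono fun u hu => Zlem T β Z Z' hZneg hZ'neg hu)
      _ = Iα * SZ := lintegral_mul_const _ (by fun_prop)
  calc (∫⁻ t in Icc (0:ℝ) T, ∫⁻ s in Icc (0:ℝ) T,
        ENNReal.ofReal (Real.exp (β * s)) *
          ENNReal.ofReal ((f t s (fun u => Y (s + u)) (fun u => Z (t + u) (s + u))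
            - f t s (fun u => Y' (s + u)) (fun u => Z' (t + u) (s + u))) ^ 2))
      ≤ ∫⁻ t in Icc (0:ℝ) T, ∫⁻ s in Icc (0:ℝ) T,
          (ENNReal.ofReal K * (ENNReal.ofReal (Real.exp (β * s)) * Ay s)
            + ENNReal.ofReal K * (ENNReal.ofReal (Real.exp (β * s)) * Bz t s)) := by
        refine setLIntegral_mono' measurableSet_Icc fun t ht => ?_
        refine setLIntegral_mono' measurableSet_Icc fun s hs => ?_
        calc ENNReal.ofReal (Real.exp (β * s)) *
              ENNReal.ofReal ((f t s (fun u => Y (s + u)) (fun u => Z (t + u) (s + u))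
                - f t s (fun u => Y' (s + u)) (fun u => Z' (t + u) (s + u))) ^ 2)
            ≤ ENNReal.ofReal (Real.exp (β * s)) *
                (ENNReal.ofReal K * (Ay s + Bz t s)) :=
              mul_le_mul_right (hf t ht s hs _ _ _ _) _
          _ = ENNReal.ofReal K * (ENNReal.ofReal (Real.exp (β * s)) * Ay s)
              + ENNReal.ofReal K * (ENNReal.ofReal (Real.exp (β * s)) * Bz t s) := by ring
    _ = (∫⁻ t in Icc (0:ℝ) T, ∫⁻ s in Icc (0:ℝ) T,
            ENNReal.ofReal K * (ENNReal.ofReal (Real.exp (β * s)) * Ay s))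
        + ∫⁻ t in Icc (0:ℝ) T, ∫⁻ s in Icc (0:ℝ) T,
            ENNReal.ofReal K * (ENNReal.ofReal (Real.exp (β * s)) * Bz t s) := by
        have m1 : Measurable fun s : ℝ =>
            ENNReal.ofReal K * (ENNReal.ofReal (Real.exp (β * s)) * Ay s) := by
          apply Measurable.const_mul
          exact ((by fun_prop : Measurable fun s : ℝ =>
            ENNReal.ofReal (Real.exp (β * s)))).mul mAy
        calc ∫⁻ t in Icc (0:ℝ) T, ∫⁻ s in Icc (0:ℝ) T,
              (ENNReal.ofReal K * (ENNReal.ofReal (Real.exp (β * s)) * Ay s)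
                + ENNReal.ofReal K * (ENNReal.ofReal (Real.exp (β * s)) * Bz t s))
            = ∫⁻ t in Icc (0:ℝ) T,
                ((∫⁻ s in Icc (0:ℝ) T,
                    ENNReal.ofReal K * (ENNReal.ofReal (Real.exp (β * s)) * Ay s))
                  + ∫⁻ s in Icc (0:ℝ) T,
                      ENNReal.ofReal K * (ENNReal.ofReal (Real.exp (β * s)) * Bz t s)) :=
              lintegral_congr fun t => lintegral_add_left m1 _
          _ = _ := lintegral_add_left measurable_const _
    _ = ENNReal.ofReal K *
          ((∫⁻ s in Icc (0:ℝ) T, ENNReal.ofReal (Real.exp (β * s)) * Ay s) * ENNReal.ofReal T)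
        + ENNReal.ofReal K * ∫⁻ t in Icc (0:ℝ) T, ∫⁻ s in Icc (0:ℝ) T,
            ENNReal.ofReal (Real.exp (β * s)) * Bz t s := by
        congr 1
        · rw [setLIntegral_const, Real.volume_Icc, sub_zero,
            lintegral_const_mul' _ _ ENNReal.ofReal_ne_top, mul_assoc]
        · rw [← lintegral_const_mul' _ _ ENNReal.ofReal_ne_top]
          exact lintegral_congr fun t => lintegral_const_mul' _ _ ENNReal.ofReal_ne_top
    _ ≤ ENNReal.ofReal K * ((Iα * SY) * ENNReal.ofReal T)
        + ENNReal.ofReal K * (Iα * SZ) :=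
        add_le_add (mul_le_mul_right (mul_le_mul_left hIYe _) _)
          (mul_le_mul_right hIZe _)
    _ = ENNReal.ofReal K * Iα * (ENNReal.ofReal T * SY + SZ) := by ring
end

section
/- Let T > 0, β ≥ 0, K ≥ 0, and let α be a probability measure on [−T, 0]. Let f : [0,T] × [0,T] × ( [−T,0] → ℝ ) × ( [−T,0] → ℝ ) → ℝ satisfy the delayed Lipschitz condition: for all (t,s) ∈ [0,T]² and all y, y', z, z' : [−T,0] → ℝ, |f(t,s,y,z) − f(t,s,y',z')|² ≤ K ( ∫_{[−T,0]} |y(u) − y'(u)|² dα(u) + ∫_{[−T,0]} |z(u) − z'(u)|² dα(u) ). Assume ∫_{[0,T]×[0,T]} e^{βs} |f(t,s,0,0)|² ds dt < ∞, where 0 denotes the zero function on [−T,0]. Let Y : ℝ → ℝ be measurable with Y(t) = Y(0) for t < 0 and ∫_{−T}^{T} e^{βs} |Y(s)|² ds < ∞, and let Z : ℝ × ℝ → ℝ be measurable with Z(t,s) = 0 whenever t < 0 or s < 0 and ∫_{[0,T]×[0,T]} e^{βs} |Z(t,s)|² ds dt < ∞. Then ∫_{[0,T]×[0,T]} e^{βs}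 |f(t,s,Y_s,Z_{t,s})|² ds dt ≤ 2K e^{βT} ( T ∫_{−T}^{T} e^{βs} |Y(s)|² ds + ∫_{[0,T]×[0,T]} e^{βs} |Z(t,s)|² ds dt ) + 2 ∫_{[0,T]×[0,T]} e^{βs} |f(t,s,0,0)|² ds dt < ∞. -/
open MeasureTheory Set
open scoped ENNReal

lemma aux_shift (g : ℝ → ℝ≥0∞) (a b u : ℝ) :
    ∫⁻ s in Icc a b, g (s + u) = ∫⁻ s in Icc (a + u) (b + u), g s := by
  rw [← lintegral_indicator measurableSet_Icc, ← lintegral_indicator measurableSet_Icc]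
  calc ∫⁻ s, (Icc a b).indicator (fun s => g (s + u)) s
      = ∫⁻ s, (Icc (a + u) (b + u)).indicator g (s + u) := by
        refine lintegral_congr fun s => ?_
        by_cases hs : s ∈ Icc a b
        · rw [indicator_of_mem hs, indicator_of_mem
            (by simp only [mem_Icc] at hs ⊢; constructor <;> linarith [hs.1, hs.2])]
        · rw [indicator_of_notMem hs, indicator_of_notMem
            (by simp only [mem_Icc] at hs ⊢; intro h; exact hs ⟨by linarith [h.1], by linarith [h.2]⟩)]
    _ = ∫⁻ s, (Icc (a + u) (b + u)).indicator g s :=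
        lintegral_add_right_eq_self ((Icc (a + u) (b + u)).indicator g) u

lemma aux_cutoff (g : ℝ → ℝ≥0∞) (hg : ∀ s < (0:ℝ), g s = 0) {a b T : ℝ} (hb : b ≤ T) :
    ∫⁻ s in Icc a b, g s ≤ ∫⁻ s in Icc 0 T, g s := by
  have h1 : ∀ s, g s = (Ici (0:ℝ)).indicator g s := by
    intro s
    by_cases h : (0:ℝ) ≤ s
    · rw [indicator_of_mem (mem_Ici.mpr h)]
    · rw [indicator_of_notMem (by simpa using h), hg s (lt_of_not_ge h)]
  calc ∫⁻ s in Icc a b, g s = ∫⁻ s in Icc a b, (Ici 0).indicator g s :=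
        lintegral_congr fun s => h1 s
    _ = ∫⁻ s in Ici 0 ∩ Icc a b, g s := by
        rw [lintegral_indicator measurableSet_Ici, Measure.restrict_restrict measurableSet_Ici]
    _ ≤ ∫⁻ s in Icc 0 T, g s :=
        lintegral_mono_set (fun s hs => ⟨hs.1, le_trans hs.2.2 hb⟩)

/-- The finiteness estimate for the generator along a candidate solution, from the proof of
Proposition 3.2: if `f` satisfies the delayed Lipschitz condition, `f(·,·,0,0)` is square
integrable with weight `e^{βs}`, and `(Y,Z)` lie in the weighted `L²` spaces, then the weighted
double integral of `|f(t,s,Y_s,Z_{t,s})|²` is bounded by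
`2K e^{βT}(T‖Y‖² + ‖Z‖²) + 2‖f(·,·,0,0)‖²`, and in particular finite. -/
theorem stmt_2 (T β K : ℝ) (hT : 0 < T) (hβ : 0 ≤ β) (hK : 0 ≤ K)
    (α : Measure ℝ) [IsProbabilityMeasure α] (hα : α (Set.Icc (-T) 0)ᶜ = 0)
    (f : ℝ → ℝ → (ℝ → ℝ) → (ℝ → ℝ) → ℝ)
    (hf : ∀ t ∈ Set.Icc (0:ℝ) T, ∀ s ∈ Set.Icc (0:ℝ) T, ∀ y y' z z' : ℝ → ℝ,
      ENNReal.ofReal ((f t s y z - f t s y' z') ^ 2)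
        ≤ ENNReal.ofReal K *
            ((∫⁻ u, ENNReal.ofReal ((y u - y' u) ^ 2) ∂α)
              + ∫⁻ u, ENNReal.ofReal ((z u - z' u) ^ 2) ∂α))
    (hf0 : (∫⁻ t in Icc (0:ℝ) T, ∫⁻ s in Icc (0:ℝ) T,
        ENNReal.ofReal (Real.exp (β * s)) *
          ENNReal.ofReal ((f t s (fun _ => (0:ℝ)) (fun _ => (0:ℝ))) ^ 2)) < ⊤)
    (Y : ℝ → ℝ) (hY : Measurable Y) (hYneg : ∀ t < (0 : ℝ), Y t = Y 0)
    (hYint : (∫⁻ s in Icc (-T) T,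
        ENNReal.ofReal (Real.exp (β * s)) * ENNReal.ofReal ((Y s) ^ 2)) < ⊤)
    (Z : ℝ → ℝ → ℝ) (hZ : Measurable (Function.uncurry Z))
    (hZneg : ∀ t s : ℝ, t < 0 ∨ s < 0 → Z t s = 0)
    (hZint : (∫⁻ t in Icc (0:ℝ) T, ∫⁻ s in Icc (0:ℝ) T,
        ENNReal.ofReal (Real.exp (β * s)) * ENNReal.ofReal ((Z t s) ^ 2)) < ⊤) :
    (∫⁻ t in Icc (0:ℝ) T, ∫⁻ s in Icc (0:ℝ) T,
        ENNReal.ofReal (Real.exp (β * s)) *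
          ENNReal.ofReal ((f t s (fun u => Y (s + u)) (fun u => Z (t + u) (s + u))) ^ 2))
      ≤ ENNReal.ofReal (2 * K) * ENNReal.ofReal (Real.exp (β * T)) *
          (ENNReal.ofReal T *
              (∫⁻ s in Icc (-T) T,
                ENNReal.ofReal (Real.exp (β * s)) * ENNReal.ofReal ((Y s) ^ 2))
            + ∫⁻ t in Icc (0:ℝ) T, ∫⁻ s in Icc (0:ℝ) T,
                ENNReal.ofReal (Real.exp (β * s)) * ENNReal.ofReal ((Z t s) ^ 2))
        + 2 * ∫⁻ t in Icc (0:ℝ) T, ∫⁻ s in Icc (0:ℝ) T,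
            ENNReal.ofReal (Real.exp (β * s)) *
              ENNReal.ofReal ((f t s (fun _ => (0:ℝ)) (fun _ => (0:ℝ))) ^ 2)
    ∧ ENNReal.ofReal (2 * K) * ENNReal.ofReal (Real.exp (β * T)) *
          (ENNReal.ofReal T *
              (∫⁻ s in Icc (-T) T,
                ENNReal.ofReal (Real.exp (β * s)) * ENNReal.ofReal ((Y s) ^ 2))
            + ∫⁻ t in Icc (0:ℝ) T, ∫⁻ s in Icc (0:ℝ) T,
                ENNReal.ofReal (Real.exp (β * s)) * ENNReal.ofReal ((Z t s) ^ 2))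
        + 2 * (∫⁻ t in Icc (0:ℝ) T, ∫⁻ s in Icc (0:ℝ) T,
            ENNReal.ofReal (Real.exp (β * s)) *
              ENNReal.ofReal ((f t s (fun _ => (0:ℝ)) (fun _ => (0:ℝ))) ^ 2)) < ⊤ := by
  have hZm : Measurable fun p : ℝ × ℝ => Z p.1 p.2 := hZ
  have hEs : Measurable fun s : ℝ => ENNReal.ofReal (Real.exp (β * s)) :=
    (Real.measurable_exp.comp (measurable_const.mul measurable_id)).ennreal_ofReal
  have hofReal_ne_top : ∀ x : ℝ, ENNReal.ofReal x ≠ ⊤ := fun x => ENNReal.ofReal_ne_top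
  -- a.e. membership in Icc (-T) 0 for α
  have hαae : ∀ᵐ u ∂α, u ∈ Icc (-T) 0 := by
    have : {u : ℝ | ¬ u ∈ Icc (-T) 0} = (Icc (-T) 0)ᶜ := rfl
    rw [ae_iff, this]
    exact hα
  -- weight inequality
  have hw : ∀ u : ℝ, -T ≤ u → ∀ s : ℝ,
      ENNReal.ofReal (Real.exp (β * s))
        ≤ ENNReal.ofReal (Real.exp (β * T)) * ENNReal.ofReal (Real.exp (β * (s + u))) := by
    intro u hu s
    rw [← ENNReal.ofReal_mul (Real.exp_nonneg _), ← Real.exp_add]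
    exact ENNReal.ofReal_le_ofReal (Real.exp_le_exp.mpr (by nlinarith))
  -- Y part (fixed u)
  have hYpart : ∀ u ∈ Icc (-T) 0,
      (∫⁻ s in Icc (0:ℝ) T,
          ENNReal.ofReal (Real.exp (β * s)) * ENNReal.ofReal ((Y (s + u)) ^ 2))
        ≤ ENNReal.ofReal (Real.exp (β * T)) *
            ∫⁻ s in Icc (-T) T,
              ENNReal.ofReal (Real.exp (β * s)) * ENNReal.ofReal ((Y s) ^ 2) := by
    intro u hu
    calc (∫⁻ s in Icc (0:ℝ) T,
            ENNReal.ofReal (Real.exp (β * s)) * ENNReal.ofReal ((Y (s + u)) ^ 2))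
        ≤ ∫⁻ s in Icc (0:ℝ) T, ENNReal.ofReal (Real.exp (β * T)) *
            (ENNReal.ofReal (Real.exp (β * (s + u))) * ENNReal.ofReal ((Y (s + u)) ^ 2)) := by
          refine lintegral_mono fun s => ?_
          rw [← mul_assoc]
          exact mul_le_mul_left (hw u hu.1 s) _
      _ = ENNReal.ofReal (Real.exp (β * T)) * ∫⁻ s in Icc (0:ℝ) T,
            (fun s => ENNReal.ofReal (Real.exp (β * s)) * ENNReal.ofReal ((Y s) ^ 2)) (s + u) :=
          lintegral_const_mul' _ _ (hofReal_ne_top _)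
      _ = ENNReal.ofReal (Real.exp (β * T)) * ∫⁻ s in Icc (0 + u) (T + u),
            ENNReal.ofReal (Real.exp (β * s)) * ENNReal.ofReal ((Y s) ^ 2) := by
          rw [aux_shift (fun s => ENNReal.ofReal (Real.exp (β * s)) * ENNReal.ofReal ((Y s) ^ 2))]
      _ ≤ ENNReal.ofReal (Real.exp (β * T)) * ∫⁻ s in Icc (-T) T,
            ENNReal.ofReal (Real.exp (β * s)) * ENNReal.ofReal ((Y s) ^ 2) :=
          mul_le_mul_right (lintegral_mono_set
            (Icc_subset_Icc (by linarith [hu.1]) (by linarith [hu.2]))) _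
  -- Z row part (fixed t, u)
  have hΦZzero : ∀ t < (0:ℝ),
      (∫⁻ s in Icc (0:ℝ) T,
        ENNReal.ofReal (Real.exp (β * s)) * ENNReal.ofReal ((Z t s) ^ 2)) = 0 := by
    intro t ht
    have h0 : ∀ s : ℝ, ENNReal.ofReal (Real.exp (β * s)) * ENNReal.ofReal ((Z t s) ^ 2)
        = (0:ℝ≥0∞) := by
      intro s; rw [hZneg t s (Or.inl ht)]; simp
    rw [lintegral_congr h0, lintegral_zero]
  have hZrow : ∀ t : ℝ, ∀ u ∈ Icc (-T) 0,
      (∫⁻ s in Icc (0:ℝ) T,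
          ENNReal.ofReal (Real.exp (β * s)) * ENNReal.ofReal ((Z (t + u) (s + u)) ^ 2))
        ≤ ENNReal.ofReal (Real.exp (β * T)) *
            ∫⁻ s in Icc (0:ℝ) T,
              ENNReal.ofReal (Real.exp (β * s)) * ENNReal.ofReal ((Z (t + u) s) ^ 2) := by
    intro t u hu
    calc (∫⁻ s in Icc (0:ℝ) T,
            ENNReal.ofReal (Real.exp (β * s)) * ENNReal.ofReal ((Z (t + u) (s + u)) ^ 2))
        ≤ ∫⁻ s in Icc (0:ℝ) T, ENNReal.ofReal (Real.exp (β * T)) *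
            (ENNReal.ofReal (Real.exp (β * (s + u))) *
              ENNReal.ofReal ((Z (t + u) (s + u)) ^ 2)) := by
          refine lintegral_mono fun s => ?_
          rw [← mul_assoc]
          exact mul_le_mul_left (hw u hu.1 s) _
      _ = ENNReal.ofReal (Real.exp (β * T)) * ∫⁻ s in Icc (0:ℝ) T,
            (fun s => ENNReal.ofReal (Real.exp (β * s)) *
              ENNReal.ofReal ((Z (t + u) s) ^ 2)) (s + u) :=
          lintegral_const_mul' _ _ (hofReal_ne_top _)
      _ = ENNReal.ofReal (Real.exp (β * T)) * ∫⁻ s in Icc (0 + u) (T + u),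
            ENNReal.ofReal (Real.exp (β * s)) * ENNReal.ofReal ((Z (t + u) s) ^ 2) := by
          rw [aux_shift (fun s => ENNReal.ofReal (Real.exp (β * s)) *
            ENNReal.ofReal ((Z (t + u) s) ^ 2))]
      _ ≤ ENNReal.ofReal (Real.exp (β * T)) * ∫⁻ s in Icc (0:ℝ) T,
            ENNReal.ofReal (Real.exp (β * s)) * ENNReal.ofReal ((Z (t + u) s) ^ 2) := by
          refine mul_le_mul_right (aux_cutoff _ ?_ (by linarith [hu.2])) _
          intro s hs
          rw [hZneg _ s (Or.inr hs)]
          simp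
  -- measurability of iterated pieces
  have hYsq : Measurable fun p : ℝ × ℝ => ENNReal.ofReal ((Y (p.1 + p.2)) ^ 2) :=
    ((hY.comp (measurable_fst.add measurable_snd)).pow_const 2).ennreal_ofReal
  have hYint_meas : Measurable fun s : ℝ => ∫⁻ u, ENNReal.ofReal ((Y (s + u)) ^ 2) ∂α :=
 by
    apply Measurable.lintegral_prod_right
    exact hYsq
  have hZuv : Measurable fun p : (ℝ × ℝ) × ℝ =>
      ENNReal.ofReal ((Z (p.1.1 + p.2) (p.1.2 + p.2)) ^ 2) :=
    ((hZm.comp ((measurable_fst.fst.add measurable_snd).prodMk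
      (measurable_fst.snd.add measurable_snd))).pow_const 2).ennreal_ofReal
  have hZint_meas : Measurable fun p : ℝ × ℝ =>
      ∫⁻ u, ENNReal.ofReal ((Z (p.1 + u) (p.2 + u)) ^ 2) ∂α :=
by
    apply Measurable.lintegral_prod_right
    exact hZuv
  have hPhiZ : Measurable fun t : ℝ => ∫⁻ s in Icc (0:ℝ) T,
      ENNReal.ofReal (Real.exp (β * s)) * ENNReal.ofReal ((Z t s) ^ 2) :=
by
    apply Measurable.lintegral_prod_right
    exact (hEs.comp measurable_snd).mul ((hZm.pow_const 2).ennreal_ofReal)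
  -- A part: the s-integral of the Y delayed term
  have hAinner : (∫⁻ s in Icc (0:ℝ) T, ENNReal.ofReal (Real.exp (β * s)) *
        ∫⁻ u, ENNReal.ofReal ((Y (s + u)) ^ 2) ∂α)
      ≤ ENNReal.ofReal (Real.exp (β * T)) *
          ∫⁻ s in Icc (-T) T,
            ENNReal.ofReal (Real.exp (β * s)) * ENNReal.ofReal ((Y s) ^ 2) := by
    calc (∫⁻ s in Icc (0:ℝ) T, ENNReal.ofReal (Real.exp (β * s)) *
            ∫⁻ u, ENNReal.ofReal ((Y (s + u)) ^ 2) ∂α)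
        = ∫⁻ s in Icc (0:ℝ) T, ∫⁻ u, ENNReal.ofReal (Real.exp (β * s)) *
            ENNReal.ofReal ((Y (s + u)) ^ 2) ∂α :=
          lintegral_congr fun s => (lintegral_const_mul' _ _ (hofReal_ne_top _)).symm
      _ = ∫⁻ u, (∫⁻ s in Icc (0:ℝ) T, ENNReal.ofReal (Real.exp (β * s)) *
            ENNReal.ofReal ((Y (s + u)) ^ 2)) ∂α := by
          refine lintegral_lintegral_swap ?_
          exact ((hEs.comp measurable_fst).mul hYsq).aemeasurable
      _ ≤ ∫⁻ _ , (ENNReal.ofReal (Real.exp (β * T)) *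
            ∫⁻ s in Icc (-T) T,
              ENNReal.ofReal (Real.exp (β * s)) * ENNReal.ofReal ((Y s) ^ 2)) ∂α :=
          by refine lintegral_mono_ae ?_; exact hαae.mono fun u hu => hYpart u hu
      _ = ENNReal.ofReal (Real.exp (β * T)) *
            ∫⁻ s in Icc (-T) T,
              ENNReal.ofReal (Real.exp (β * s)) * ENNReal.ofReal ((Y s) ^ 2) := by
          rw [lintegral_const, measure_univ, mul_one]
  -- B part
  have hBinner : ∀ t : ℝ, (∫⁻ s in Icc (0:ℝ) T, ENNReal.ofReal (Real.exp (β * s)) *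
        ∫⁻ u, ENNReal.ofReal ((Z (t + u) (s + u)) ^ 2) ∂α)
      ≤ ∫⁻ u, ENNReal.ofReal (Real.exp (β * T)) *
          (∫⁻ s in Icc (0:ℝ) T,
            ENNReal.ofReal (Real.exp (β * s)) * ENNReal.ofReal ((Z (t + u) s) ^ 2)) ∂α := by
    intro t
    calc (∫⁻ s in Icc (0:ℝ) T, ENNReal.ofReal (Real.exp (β * s)) *
            ∫⁻ u, ENNReal.ofReal ((Z (t + u) (s + u)) ^ 2) ∂α)
        = ∫⁻ s in Icc (0:ℝ) T, ∫⁻ u, ENNReal.ofReal (Real.exp (β * s)) *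
            ENNReal.ofReal ((Z (t + u) (s + u)) ^ 2) ∂α :=
          lintegral_congr fun s => (lintegral_const_mul' _ _ (hofReal_ne_top _)).symm
      _ = ∫⁻ u, (∫⁻ s in Icc (0:ℝ) T, ENNReal.ofReal (Real.exp (β * s)) *
            ENNReal.ofReal ((Z (t + u) (s + u)) ^ 2)) ∂α := by
          refine lintegral_lintegral_swap ?_
          exact ((hEs.comp measurable_fst).mul
            ((hZm.comp ((measurable_const.add measurable_snd).prodMk
              (measurable_fst.add measurable_snd))).pow_const 2).ennreal_ofReal).aemeasurable
      _ ≤ ∫⁻ u, ENNReal.ofReal (Real.exp (β * T)) *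
            (∫⁻ s in Icc (0:ℝ) T,
              ENNReal.ofReal (Real.exp (β * s)) * ENNReal.ofReal ((Z (t + u) s) ^ 2)) ∂α :=
          by refine lintegral_mono_ae ?_; exact hαae.mono fun u hu => hZrow t u hu
  have hB : (∫⁻ t in Icc (0:ℝ) T, ∫⁻ u, ENNReal.ofReal (Real.exp (β * T)) *
        (∫⁻ s in Icc (0:ℝ) T,
          ENNReal.ofReal (Real.exp (β * s)) * ENNReal.ofReal ((Z (t + u) s) ^ 2)) ∂α)
      ≤ ENNReal.ofReal (Real.exp (β * T)) *
          ∫⁻ t in Icc (0:ℝ) T, ∫⁻ s in Icc (0:ℝ) T,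
            ENNReal.ofReal (Real.exp (β * s)) * ENNReal.ofReal ((Z t s) ^ 2) := by
    calc (∫⁻ t in Icc (0:ℝ) T, ∫⁻ u, ENNReal.ofReal (Real.exp (β * T)) *
            (∫⁻ s in Icc (0:ℝ) T,
              ENNReal.ofReal (Real.exp (β * s)) * ENNReal.ofReal ((Z (t + u) s) ^ 2)) ∂α)
        = ∫⁻ u, (∫⁻ t in Icc (0:ℝ) T, ENNReal.ofReal (Real.exp (β * T)) *
            (∫⁻ s in Icc (0:ℝ) T,
              ENNReal.ofReal (Real.exp (β * s)) * ENNReal.ofReal ((Z (t + u) s) ^ 2))) ∂α := by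
          refine lintegral_lintegral_swap ?_
          exact (measurable_const.mul
            (hPhiZ.comp (measurable_fst.add measurable_snd))).aemeasurable
      _ ≤ ∫⁻ _, (ENNReal.ofReal (Real.exp (β * T)) *
            ∫⁻ t in Icc (0:ℝ) T, ∫⁻ s in Icc (0:ℝ) T,
              ENNReal.ofReal (Real.exp (β * s)) * ENNReal.ofReal ((Z t s) ^ 2)) ∂α := by
          refine lintegral_mono_ae (hαae.mono fun u hu => ?_)
          calc (∫⁻ t in Icc (0:ℝ) T, ENNReal.ofReal (Real.exp (β * T)) *
                  (∫⁻ s in Icc (0:ℝ) T,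
                    ENNReal.ofReal (Real.exp (β * s)) * ENNReal.ofReal ((Z (t + u) s) ^ 2)))
              = ENNReal.ofReal (Real.exp (β * T)) * ∫⁻ t in Icc (0:ℝ) T,
                  (fun t => ∫⁻ s in Icc (0:ℝ) T,
                    ENNReal.ofReal (Real.exp (β * s)) *
                      ENNReal.ofReal ((Z t s) ^ 2)) (t + u) :=
                lintegral_const_mul' _ _ (hofReal_ne_top _)
            _ = ENNReal.ofReal (Real.exp (β * T)) * ∫⁻ t in Icc (0 + u) (T + u),
                  ∫⁻ s in Icc (0:ℝ) T,
                    ENNReal.ofReal (Real.exp (β * s)) * ENNReal.ofReal ((Z t s) ^ 2) := by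
                rw [aux_shift (fun t => ∫⁻ s in Icc (0:ℝ) T,
                  ENNReal.ofReal (Real.exp (β * s)) * ENNReal.ofReal ((Z t s) ^ 2))]
            _ ≤ ENNReal.ofReal (Real.exp (β * T)) * ∫⁻ t in Icc (0:ℝ) T,
                  ∫⁻ s in Icc (0:ℝ) T,
                    ENNReal.ofReal (Real.exp (β * s)) * ENNReal.ofReal ((Z t s) ^ 2) :=
                mul_le_mul_right (aux_cutoff _ hΦZzero (by linarith [hu.2])) _
      _ = ENNReal.ofReal (Real.exp (β * T)) *
            ∫⁻ t in Icc (0:ℝ) T, ∫⁻ s in Icc (0:ℝ) T,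
              ENNReal.ofReal (Real.exp (β * s)) * ENNReal.ofReal ((Z t s) ^ 2) := by
          rw [lintegral_const, measure_univ, mul_one]
  -- pointwise bound
  have hpt : ∀ t ∈ Icc (0:ℝ) T, ∀ s ∈ Icc (0:ℝ) T,
      ENNReal.ofReal (Real.exp (β * s)) *
          ENNReal.ofReal ((f t s (fun u => Y (s + u)) (fun u => Z (t + u) (s + u))) ^ 2)
        ≤ ENNReal.ofReal (2 * K) * (ENNReal.ofReal (Real.exp (β * s)) *
              ((∫⁻ u, ENNReal.ofReal ((Y (s + u)) ^ 2) ∂α)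
                + ∫⁻ u, ENNReal.ofReal ((Z (t + u) (s + u)) ^ 2) ∂α))
          + 2 * (ENNReal.ofReal (Real.exp (β * s)) *
              ENNReal.ofReal ((f t s (fun _ => (0:ℝ)) (fun _ => (0:ℝ))) ^ 2)) := by
    intro t ht s hs
    set a := f t s (fun u => Y (s + u)) (fun u => Z (t + u) (s + u)) with ha
    set b := f t s (fun _ => (0:ℝ)) (fun _ => (0:ℝ)) with hb
    have h2 := hf t ht s hs (fun u => Y (s + u)) (fun _ => 0)
      (fun u => Z (t + u) (s + u)) (fun _ => 0)
    simp only [sub_zero] at h2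
    have h1 : ENNReal.ofReal (a ^ 2)
        ≤ 2 * ENNReal.ofReal ((a - b) ^ 2) + 2 * ENNReal.ofReal (b ^ 2) := by
      calc ENNReal.ofReal (a ^ 2)
          ≤ ENNReal.ofReal (2 * (a - b) ^ 2 + 2 * b ^ 2) :=
            ENNReal.ofReal_le_ofReal (by nlinarith [sq_nonneg (a - 2 * b)])
        _ = ENNReal.ofReal (2 * (a - b) ^ 2) + ENNReal.ofReal (2 * b ^ 2) :=
            ENNReal.ofReal_add (by positivity) (by positivity)
        _ = 2 * ENNReal.ofReal ((a - b) ^ 2) + 2 * ENNReal.ofReal (b ^ 2) := by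
            rw [ENNReal.ofReal_mul (by norm_num), ENNReal.ofReal_mul (by norm_num)]
            norm_num
    calc ENNReal.ofReal (Real.exp (β * s)) * ENNReal.ofReal (a ^ 2)
        ≤ ENNReal.ofReal (Real.exp (β * s)) *
            (2 * ENNReal.ofReal ((a - b) ^ 2) + 2 * ENNReal.ofReal (b ^ 2)) :=
          mul_le_mul_right h1 _
      _ ≤ ENNReal.ofReal (Real.exp (β * s)) *
            (2 * (ENNReal.ofReal K *
              ((∫⁻ u, ENNReal.ofReal ((Y (s + u)) ^ 2) ∂α)
                + ∫⁻ u, ENNReal.ofReal ((Z (t + u) (s + u)) ^ 2) ∂α))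
              + 2 * ENNReal.ofReal (b ^ 2)) := by
          exact mul_le_mul_right (add_le_add_left (mul_le_mul_right h2 2) _) _
      _ = ENNReal.ofReal (2 * K) * (ENNReal.ofReal (Real.exp (β * s)) *
              ((∫⁻ u, ENNReal.ofReal ((Y (s + u)) ^ 2) ∂α)
                + ∫⁻ u, ENNReal.ofReal ((Z (t + u) (s + u)) ^ 2) ∂α))
          + 2 * (ENNReal.ofReal (Real.exp (β * s)) * ENNReal.ofReal (b ^ 2)) := by
          rw [ENNReal.ofReal_mul (by norm_num : (0:ℝ) ≤ 2)]
          norm_num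
          ring
  -- splitting measurabilities
  have hPmeas_s : ∀ t : ℝ, Measurable fun s : ℝ =>
      ENNReal.ofReal (2 * K) * (ENNReal.ofReal (Real.exp (β * s)) *
        ((∫⁻ u, ENNReal.ofReal ((Y (s + u)) ^ 2) ∂α)
          + ∫⁻ u, ENNReal.ofReal ((Z (t + u) (s + u)) ^ 2) ∂α)) := by
    intro t
    refine measurable_const.mul (hEs.mul (hYint_meas.add ?_))
    exact hZint_meas.comp (measurable_const.prodMk measurable_id)
  have hPmeas_t : Measurable fun t : ℝ => ∫⁻ s in Icc (0:ℝ) T,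
      ENNReal.ofReal (2 * K) * (ENNReal.ofReal (Real.exp (β * s)) *
        ((∫⁻ u, ENNReal.ofReal ((Y (s + u)) ^ 2) ∂α)
          + ∫⁻ u, ENNReal.ofReal ((Z (t + u) (s + u)) ^ 2) ∂α)) := by
    apply Measurable.lintegral_prod_right
    exact measurable_const.mul ((hEs.comp measurable_snd).mul
      ((hYint_meas.comp measurable_snd).add hZint_meas))
  have hYinner_meas : ∀ t : ℝ, Measurable fun s : ℝ =>
      ENNReal.ofReal (Real.exp (β * s)) * ∫⁻ u, ENNReal.ofReal ((Y (s + u)) ^ 2) ∂α :=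
    fun _ => hEs.mul hYint_meas
  -- the P-part bound
  have hPcalc : (∫⁻ t in Icc (0:ℝ) T, ∫⁻ s in Icc (0:ℝ) T,
        ENNReal.ofReal (2 * K) * (ENNReal.ofReal (Real.exp (β * s)) *
          ((∫⁻ u, ENNReal.ofReal ((Y (s + u)) ^ 2) ∂α)
            + ∫⁻ u, ENNReal.ofReal ((Z (t + u) (s + u)) ^ 2) ∂α)))
      ≤ ENNReal.ofReal (2 * K) * ENNReal.ofReal (Real.exp (β * T)) *
          (ENNReal.ofReal T *
              (∫⁻ s in Icc (-T) T,
                ENNReal.ofReal (Real.exp (β * s)) * ENNReal.ofReal ((Y s) ^ 2))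
            + ∫⁻ t in Icc (0:ℝ) T, ∫⁻ s in Icc (0:ℝ) T,
                ENNReal.ofReal (Real.exp (β * s)) * ENNReal.ofReal ((Z t s) ^ 2)) := by
    calc (∫⁻ t in Icc (0:ℝ) T, ∫⁻ s in Icc (0:ℝ) T,
            ENNReal.ofReal (2 * K) * (ENNReal.ofReal (Real.exp (β * s)) *
              ((∫⁻ u, ENNReal.ofReal ((Y (s + u)) ^ 2) ∂α)
                + ∫⁻ u, ENNReal.ofReal ((Z (t + u) (s + u)) ^ 2) ∂α)))
        = ∫⁻ t in Icc (0:ℝ) T, ENNReal.ofReal (2 * K) * ∫⁻ s in Icc (0:ℝ) T,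
            (ENNReal.ofReal (Real.exp (β * s)) *
              ((∫⁻ u, ENNReal.ofReal ((Y (s + u)) ^ 2) ∂α)
                + ∫⁻ u, ENNReal.ofReal ((Z (t + u) (s + u)) ^ 2) ∂α)) :=
          lintegral_congr fun t => lintegral_const_mul' _ _ (hofReal_ne_top _)
      _ = ENNReal.ofReal (2 * K) * ∫⁻ t in Icc (0:ℝ) T, ∫⁻ s in Icc (0:ℝ) T,
            (ENNReal.ofReal (Real.exp (β * s)) *
              ((∫⁻ u, ENNReal.ofReal ((Y (s + u)) ^ 2) ∂α)
                + ∫⁻ u, ENNReal.ofReal ((Z (t + u) (s + u)) ^ 2) ∂α)) :=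
          lintegral_const_mul' _ _ (hofReal_ne_top _)
      _ = ENNReal.ofReal (2 * K) *
            ((∫⁻ t in Icc (0:ℝ) T, ∫⁻ s in Icc (0:ℝ) T,
              ENNReal.ofReal (Real.exp (β * s)) *
                ∫⁻ u, ENNReal.ofReal ((Y (s + u)) ^ 2) ∂α)
            + ∫⁻ t in Icc (0:ℝ) T, ∫⁻ s in Icc (0:ℝ) T,
              ENNReal.ofReal (Real.exp (β * s)) *
                ∫⁻ u, ENNReal.ofReal ((Z (t + u) (s + u)) ^ 2) ∂α) := by
          congr 1
          calc (∫⁻ t in Icc (0:ℝ) T, ∫⁻ s in Icc (0:ℝ) T,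
                  (ENNReal.ofReal (Real.exp (β * s)) *
                    ((∫⁻ u, ENNReal.ofReal ((Y (s + u)) ^ 2) ∂α)
                      + ∫⁻ u, ENNReal.ofReal ((Z (t + u) (s + u)) ^ 2) ∂α)))
              = ∫⁻ t in Icc (0:ℝ) T,
                  ((∫⁻ s in Icc (0:ℝ) T, ENNReal.ofReal (Real.exp (β * s)) *
                      ∫⁻ u, ENNReal.ofReal ((Y (s + u)) ^ 2) ∂α)
                  + ∫⁻ s in Icc (0:ℝ) T, ENNReal.ofReal (Real.exp (β * s)) *
                      ∫⁻ u, ENNReal.ofReal ((Z (t + u) (s + u)) ^ 2) ∂α) := by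
                refine lintegral_congr fun t => ?_
                rw [← lintegral_add_left (hYinner_meas t)]
                exact lintegral_congr fun s => mul_add _ _ _
            _ = _ := by
                refine lintegral_add_left ?_ _
                exact measurable_const
      _ ≤ ENNReal.ofReal (2 * K) *
            ((ENNReal.ofReal (Real.exp (β * T)) *
              (∫⁻ s in Icc (-T) T,
                ENNReal.ofReal (Real.exp (β * s)) * ENNReal.ofReal ((Y s) ^ 2)))
              * ENNReal.ofReal T
            + ENNReal.ofReal (Real.exp (β * T)) *
              ∫⁻ t in Icc (0:ℝ) T, ∫⁻ s in Icc (0:ℝ) T,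
                ENNReal.ofReal (Real.exp (β * s)) * ENNReal.ofReal ((Z t s) ^ 2)) := by
          refine mul_le_mul_right (add_le_add ?_ ?_) _
          · calc (∫⁻ _ in Icc (0:ℝ) T,
                    (∫⁻ s in Icc (0:ℝ) T, ENNReal.ofReal (Real.exp (β * s)) *
                      ∫⁻ u, ENNReal.ofReal ((Y (s + u)) ^ 2) ∂α))
                = (∫⁻ s in Icc (0:ℝ) T, ENNReal.ofReal (Real.exp (β * s)) *
                      ∫⁻ u, ENNReal.ofReal ((Y (s + u)) ^ 2) ∂α) * volume (Icc (0:ℝ) T) :=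
                  setLIntegral_const _ _
              _ ≤ (ENNReal.ofReal (Real.exp (β * T)) *
                    (∫⁻ s in Icc (-T) T,
                      ENNReal.ofReal (Real.exp (β * s)) * ENNReal.ofReal ((Y s) ^ 2)))
                  * ENNReal.ofReal T := by
                  rw [Real.volume_Icc, sub_zero]
                  exact mul_le_mul_left hAinner _
          · exact le_trans (lintegral_mono fun t => hBinner t) hB
      _ = ENNReal.ofReal (2 * K) * ENNReal.ofReal (Real.exp (β * T)) *
            (ENNReal.ofReal T *
                (∫⁻ s in Icc (-T) T,
                  ENNReal.ofReal (Real.exp (β * s)) * ENNReal.ofReal ((Y s) ^ 2))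
              + ∫⁻ t in Icc (0:ℝ) T, ∫⁻ s in Icc (0:ℝ) T,
                  ENNReal.ofReal (Real.exp (β * s)) * ENNReal.ofReal ((Z t s) ^ 2)) := by
          ring
  -- the Q-part identity
  have hQcalc : (∫⁻ t in Icc (0:ℝ) T, ∫⁻ s in Icc (0:ℝ) T,
        2 * (ENNReal.ofReal (Real.exp (β * s)) *
          ENNReal.ofReal ((f t s (fun _ => (0:ℝ)) (fun _ => (0:ℝ))) ^ 2)))
      = 2 * ∫⁻ t in Icc (0:ℝ) T, ∫⁻ s in Icc (0:ℝ) T,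
          ENNReal.ofReal (Real.exp (β * s)) *
            ENNReal.ofReal ((f t s (fun _ => (0:ℝ)) (fun _ => (0:ℝ))) ^ 2) := by
    calc (∫⁻ t in Icc (0:ℝ) T, ∫⁻ s in Icc (0:ℝ) T,
            2 * (ENNReal.ofReal (Real.exp (β * s)) *
              ENNReal.ofReal ((f t s (fun _ => (0:ℝ)) (fun _ => (0:ℝ))) ^ 2)))
        = ∫⁻ t in Icc (0:ℝ) T, 2 * ∫⁻ s in Icc (0:ℝ) T,
            ENNReal.ofReal (Real.exp (β * s)) *
              ENNReal.ofReal ((f t s (fun _ => (0:ℝ)) (fun _ => (0:ℝ))) ^ 2) :=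
          lintegral_congr fun t => lintegral_const_mul' _ _ ENNReal.ofNat_ne_top
      _ = _ := lintegral_const_mul' _ _ ENNReal.ofNat_ne_top
  constructor
  · calc (∫⁻ t in Icc (0:ℝ) T, ∫⁻ s in Icc (0:ℝ) T,
            ENNReal.ofReal (Real.exp (β * s)) *
              ENNReal.ofReal
                ((f t s (fun u => Y (s + u)) (fun u => Z (t + u) (s + u))) ^ 2))
        ≤ ∫⁻ t in Icc (0:ℝ) T, ∫⁻ s in Icc (0:ℝ) T,
            (ENNReal.ofReal (2 * K) * (ENNReal.ofReal (Real.exp (β * s)) *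
              ((∫⁻ u, ENNReal.ofReal ((Y (s + u)) ^ 2) ∂α)
                + ∫⁻ u, ENNReal.ofReal ((Z (t + u) (s + u)) ^ 2) ∂α))
            + 2 * (ENNReal.ofReal (Real.exp (β * s)) *
              ENNReal.ofReal ((f t s (fun _ => (0:ℝ)) (fun _ => (0:ℝ))) ^ 2))) :=
          setLIntegral_mono' measurableSet_Icc fun t ht =>
            setLIntegral_mono' measurableSet_Icc fun s hs => hpt t ht s hs
      _ = (∫⁻ t in Icc (0:ℝ) T, ∫⁻ s in Icc (0:ℝ) T,
            ENNReal.ofReal (2 * K) * (ENNReal.ofReal (Real.exp (β * s)) *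
              ((∫⁻ u, ENNReal.ofReal ((Y (s + u)) ^ 2) ∂α)
                + ∫⁻ u, ENNReal.ofReal ((Z (t + u) (s + u)) ^ 2) ∂α)))
          + ∫⁻ t in Icc (0:ℝ) T, ∫⁻ s in Icc (0:ℝ) T,
              2 * (ENNReal.ofReal (Real.exp (β * s)) *
                ENNReal.ofReal ((f t s (fun _ => (0:ℝ)) (fun _ => (0:ℝ))) ^ 2)) := by
          rw [← lintegral_add_left hPmeas_t]
          exact lintegral_congr fun t => lintegral_add_left (hPmeas_s t) _
      _ ≤ ENNReal.ofReal (2 * K) * ENNReal.ofReal (Real.exp (β * T)) *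
            (ENNReal.ofReal T *
                (∫⁻ s in Icc (-T) T,
                  ENNReal.ofReal (Real.exp (β * s)) * ENNReal.ofReal ((Y s) ^ 2))
              + ∫⁻ t in Icc (0:ℝ) T, ∫⁻ s in Icc (0:ℝ) T,
                  ENNReal.ofReal (Real.exp (β * s)) * ENNReal.ofReal ((Z t s) ^ 2))
          + 2 * ∫⁻ t in Icc (0:ℝ) T, ∫⁻ s in Icc (0:ℝ) T,
              ENNReal.ofReal (Real.exp (β * s)) *
                ENNReal.ofReal ((f t s (fun _ => (0:ℝ)) (fun _ => (0:ℝ))) ^ 2) := by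
          rw [hQcalc]
          exact add_le_add_left hPcalc _
  · refine ENNReal.add_lt_top.mpr ⟨?_, ?_⟩
    · exact ENNReal.mul_lt_top
        (ENNReal.mul_lt_top ENNReal.ofReal_lt_top ENNReal.ofReal_lt_top)
        (ENNReal.add_lt_top.mpr ⟨ENNReal.mul_lt_top ENNReal.ofReal_lt_top hYint, hZint⟩)
    · exact ENNReal.mul_lt_top ENNReal.ofNat_lt_top hf0
end

section
/- Let (Ω, 𝓕, P) be a probability space with a filtration (𝓕_t)_{t ∈ [0,T]}, T > 0, let ψ(0) be an integrable random variable with E[ψ(0)] ≠ 0, and let K > 0 satisfy T·K = 1. Then there exists no random variable Y(0) satisfying Y(0) = E[ψ(0) | 𝓕_0] + K·T · Y(0) almost surely; consequently, the equation Y(t) = E[ψ(t) | 𝓕_t] + K·(T − t)/(t + 1) · Y(0) (for all t ∈ [0,T], almost surely) has no solution (Y(t))_{t ∈ [0,T]}. -/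
open MeasureTheory Set

/-- Case (b) of Example 3.5: if `T·K = 1` and `E[ψ(0)] ≠ 0`, then no random variable `Y(0)`
satisfies `Y(0) = E[ψ(0)|𝓕_0] + K·T·Y(0)` a.s., and consequently the reduced equation
`Y(t) = E[ψ(t)|𝓕_t] + K(T-t)/(t+1)·Y(0)` (for all `t ∈ [0,T]`, a.s.) has no solution. -/
theorem stmt_5 {Ω : Type*} [m0 : MeasurableSpace Ω] (P : Measure Ω) [IsProbabilityMeasure P]
    (T : ℝ) (hT : 0 < T) (𝓕 : MeasureTheory.Filtration ℝ m0)
    (ψ : ℝ → Ω → ℝ) (hψ0 : Integrable (ψ 0) P) (hmean : (∫ ω, ψ 0 ω ∂P) ≠ 0)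
    (K : ℝ) (hK : 0 < K) (hTK : T * K = 1) :
    (¬ ∃ Y0 : Ω → ℝ, Y0 =ᵐ[P] fun ω => (P[ψ 0 | 𝓕 0]) ω + K * T * Y0 ω) ∧
    (¬ ∃ Y : ℝ → Ω → ℝ, ∀ t ∈ Set.Icc (0:ℝ) T,
        Y t =ᵐ[P] fun ω => (P[ψ t | 𝓕 t]) ω + K * (T - t) / (t + 1) * Y 0 ω) := by
  have hKT : K * T = 1 := by linarith [mul_comm T K ▸ hTK]
  have key : ¬ ∃ Y0 : Ω → ℝ, Y0 =ᵐ[P] fun ω => (P[ψ 0 | 𝓕 0]) ω + K * T * Y0 ω := by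
    rintro ⟨Y0, hY0⟩
    have hzero : (P[ψ 0 | 𝓕 0]) =ᵐ[P] (fun _ => (0:ℝ)) := by
      filter_upwards [hY0] with ω hω
      rw [hKT, one_mul] at hω
      linarith
    have hint : ∫ ω, (P[ψ 0 | 𝓕 0]) ω ∂P = ∫ ω, ψ 0 ω ∂P :=
      integral_condExp (𝓕.le 0)
    rw [integral_congr_ae hzero, integral_zero] at hint
    exact hmean hint.symm
  refine ⟨key, ?_⟩
  rintro ⟨Y, hY⟩
  have h0 := hY 0 ⟨le_refl 0, hT.le⟩
  refine key ⟨Y 0, ?_⟩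
  filter_upwards [h0] with ω hω
  have h1 : K * (T - 0) / (0 + 1) = 1 := by rw [sub_zero, zero_add, div_one, hKT]
  rw [h1, one_mul] at hω
  rw [hKT, one_mul]
  exact hω
end

section
/- Let (Ω, 𝓕, P) be a probability space with a filtration (𝓕_t)_{t ∈ [0,T]}, T > 0, let ψ : [0,T] → L¹(Ω, 𝓕, P) be a family of integrable random variables with E[ψ(0) | 𝓕_0] = 0 almost surely, and let K > 0 satisfy T·K = 1. Then for every 𝓕_0-measurable integrable random variable η, the family Y^η(t) := E[ψ(t) | 𝓕_t] + K·(T − t)/(t + 1) · η satisfies Y^η(0) = η almost surely and solves, for every t ∈ [0,T] almost surely, the equation Y^η(t) = E[ψ(t) | 𝓕_t] + K·(T − t)/(t + 1) · Y^η(0). In particular, distinct choices of deterministic constants η give distinct solutions, so the equation has infinitely many solutions. -/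
open MeasureTheory Set

/-- The candidate solution family of case (c) of Example 3.5:
`Y^η(t) = E[ψ(t)|𝓕_t] + K·(T-t)/(t+1)·η`. -/
noncomputable def candidateSol {Ω : Type*} [m0 : MeasurableSpace Ω] (P : Measure Ω)
    (𝓕 : MeasureTheory.Filtration ℝ m0) (T K : ℝ) (ψ : ℝ → Ω → ℝ)
    (η : Ω → ℝ) (t : ℝ) : Ω → ℝ :=
  fun ω => (P[ψ t | 𝓕 t]) ω + K * (T - t) / (t + 1) * η ω

/-- Case (c) of Example 3.5: if `T·K = 1` and `E[ψ(0)|𝓕_0] = 0` a.s., then for every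
`𝓕_0`-measurable integrable `η`, the family `Y^η(t) = E[ψ(t)|𝓕_t] + K(T-t)/(t+1)·η` satisfies
`Y^η(0) = η` a.s. and solves the reduced equation
`Y^η(t) = E[ψ(t)|𝓕_t] + K(T-t)/(t+1)·Y^η(0)` for every `t ∈ [0,T]` a.s.; moreover distinct
deterministic constants `η` give distinct solution families, so there are infinitely many
solutions. -/
theorem stmt_6 {Ω : Type*} [m0 : MeasurableSpace Ω] (P : Measure Ω) [IsProbabilityMeasure P]
    (T : ℝ) (hT : 0 < T) (𝓕 : MeasureTheory.Filtration ℝ m0)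
    (ψ : ℝ → Ω → ℝ) (hψ : ∀ t ∈ Set.Icc (0:ℝ) T, Integrable (ψ t) P)
    (hcond : P[ψ 0 | 𝓕 0] =ᵐ[P] 0)
    (K : ℝ) (hK : 0 < K) (hTK : T * K = 1) :
    (∀ η : Ω → ℝ, Integrable η P → StronglyMeasurable[𝓕 0] η →
      candidateSol P 𝓕 T K ψ η 0 =ᵐ[P] η ∧
      ∀ t ∈ Set.Icc (0:ℝ) T,
        candidateSol P 𝓕 T K ψ η t =ᵐ[P] fun ω =>
          (P[ψ t | 𝓕 t]) ω + K * (T - t) / (t + 1) * candidateSol P 𝓕 T K ψ η 0 ω) ∧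
    (∀ c c' : ℝ, c ≠ c' →
      ¬ ∀ t ∈ Set.Icc (0:ℝ) T,
          candidateSol P 𝓕 T K ψ (fun _ => c) t =ᵐ[P]
            candidateSol P 𝓕 T K ψ (fun _ => c') t) := by
  have hcoeff : K * (T - 0) / (0 + 1) = 1 := by
    rw [sub_zero, zero_add, div_one, mul_comm]; exact hTK
  have key : ∀ η : Ω → ℝ, candidateSol P 𝓕 T K ψ η 0 =ᵐ[P] η := by
    intro η
    filter_upwards [hcond] with ω hω
    simp only [candidateSol, hω, Pi.zero_apply, sub_zero, zero_add, div_one, zero_add]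
    rw [mul_comm K T, hTK, one_mul]
  constructor
  · intro η hint hmeas
    refine ⟨key η, fun t ht => ?_⟩
    filter_upwards [key η] with ω hω
    rw [hω]; rfl
  · intro c c' hcc h
    have h0 := h 0 ⟨le_refl 0, le_of_lt hT⟩
    have hc := key (fun _ => c)
    have hc' := key (fun _ => c')
    have : (fun _ : Ω => c) =ᵐ[P] fun _ => c' := (hc.symm.trans h0).trans hc'
    have hne : ∃ ω : Ω, c = c' := by
      rcases this.exists with ⟨ω, hω⟩
      exact ⟨ω, hω⟩
    rcases hne with ⟨_, h⟩
    exact hcc h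
end
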